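/- Let θ ∈ Θ₊ and let F be a θ-stable G-constellation. Then the subspace F^G of G-invariant vectors is one-dimensional and generates F as an A-module; in particular F is a cyclic A-module, and F is isomorphic as a G-equivariant A-module to A/I for some G-stable ideal I ⊆ A (i.e. F is the structure sheaf of a G-cluster). -/

import Mathlib

/-!
Common setup: `G`-constellations for a finite subgroup `G ⊆ GL(n,ℂ)`.

* `polyAct g` is the action of `g ∈ GL(n,ℂ)` on the polynomial ring
  `A = ℂ[x₁,…,xₙ]` given by `(g·f)(x) = f(g⁻¹·x)`.
* `GMod n G F` is a `G`-equivariant `A`-module structure on the ℂ-vector space `F`: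
  an `A`-module structure `actA` (as a ℂ-algebra map `A →ₐ End ℂ F`), a `G`-action
  `actG` by ℂ-linear automorphisms, and the compatibility `g·(f·v) = (g·f)·(g·v)`.
* `IrrChar G` is the set of irreducible complex characters of `G`.
* `multChar ρ χ` is the multiplicity `m_ρ` read off from a character `χ`,
  `thetaOfChar θ χ = Σ_ρ m_ρ(χ)·θ(ρ)`.
* `IsThetaParam G θ` says `θ ∈ Θ`, i.e. `Σ_ρ (dim ρ)·θ(ρ) = 0`;
  `IsThetaPlus G θ` says `θ ∈ Θ₊`.
* `M.IsSub E` says the ℂ-subspace `E` is a `G`-submodule; `M.subChar E h` is the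
  character of the induced `G`-representation on `E`.
* `M.IsConstellation` : `F` is finite dimensional and isomorphic, as a
  `ℂ[G]`-module, to the regular representation `Map(G,ℂ)`.
* `M.IsStable θ` / `M.IsSemistable θ` : `θ(E) > 0` (resp. `≥ 0`) for every
  `G`-submodule `0 ≠ E ≠ F`.
* `IsGHom M M' φ` : `φ` is simultaneously `A`-linear and `G`-equivariant.
-/

open CategoryTheory

noncomputable section

/-- The action of `g ∈ GL(n,ℂ)` on polynomials, `(g·f)(x) = f(g⁻¹·x)`:
the variable `xᵢ` is replaced by `∑ⱼ (g⁻¹)ᵢⱼ xⱼ`. -/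
def polyAct {n : ℕ} (g : GL (Fin n) ℂ) :
    MvPolynomial (Fin n) ℂ →ₐ[ℂ] MvPolynomial (Fin n) ℂ :=
  MvPolynomial.aeval fun i =>
    ∑ j : Fin n, ((g⁻¹ : GL (Fin n) ℂ) : Matrix (Fin n) (Fin n) ℂ) i j • MvPolynomial.X j

/-- A `G`-equivariant module over `A = ℂ[x₁,…,xₙ]` on the ℂ-vector space `F`. -/
structure GMod (n : ℕ) (G : Subgroup (GL (Fin n) ℂ)) (F : Type)
    [AddCommGroup F] [Module ℂ F] : Type where
  actA : MvPolynomial (Fin n) ℂ →ₐ[ℂ] Module.End ℂ F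
  actG : G →* (F ≃ₗ[ℂ] F)
  equivariance : ∀ (g : G) (f : MvPolynomial (Fin n) ℂ) (v : F),
    actG g (actA f v) = actA (polyAct (g : GL (Fin n) ℂ) f) (actG g v)

/-- The irreducible complex characters of `G`. -/
def IrrChar {n : ℕ} (G : Subgroup (GL (Fin n) ℂ)) : Type :=
  {χ : G → ℂ // ∃ V : FDRep ℂ G, Simple V ∧ ∀ g : G, FDRep.character V g = χ g}

/-- The multiplicity `m_ρ` of the irreducible character `ρ` in a character `χ`,
computed by the usual inner product of characters. -/
def multChar {n : ℕ} {G : Subgroup (GL (Fin n) ℂ)} (ρ : IrrChar G) (χ : G → ℂ) : ℂ :=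
  (Nat.card G : ℂ)⁻¹ * ∑ᶠ g : G, ρ.1 g⁻¹ * χ g

/-- `θ(E) = Σ_ρ m_ρ(E)·θ(ρ)`, computed from the character of `E`. -/
def thetaOfChar {n : ℕ} {G : Subgroup (GL (Fin n) ℂ)}
    (θ : IrrChar G → ℚ) (χ : G → ℂ) : ℂ :=
  ∑ᶠ ρ : IrrChar G, multChar ρ χ * (θ ρ : ℂ)

/-- `θ ∈ Θ`, i.e. `Σ_ρ (dim ρ)·θ(ρ) = 0` (note `dim ρ = ρ(1)`). -/
def IsThetaParam {n : ℕ} (G : Subgroup (GL (Fin n) ℂ)) (θ : IrrChar G → ℚ) : Prop :=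
  ∑ᶠ ρ : IrrChar G, ρ.1 1 * (θ ρ : ℂ) = 0

/-- `θ ∈ Θ₊`, i.e. `θ ∈ Θ` and `θ(ρ) > 0` for every nontrivial `ρ ∈ Irr(G)`. -/
def IsThetaPlus {n : ℕ} (G : Subgroup (GL (Fin n) ℂ)) (θ : IrrChar G → ℚ) : Prop :=
  IsThetaParam G θ ∧ ∀ ρ : IrrChar G, ρ.1 ≠ (fun _ => (1 : ℂ)) → 0 < θ ρ

namespace GMod

variable {n : ℕ} {G : Subgroup (GL (Fin n) ℂ)} {F F' : Type}
  [AddCommGroup F] [Module ℂ F] [AddCommGroup F'] [Module ℂ F']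

/-- The character of the `G`-representation `F`. -/
def char (M : GMod n G F) : G → ℂ :=
  fun g => LinearMap.trace ℂ F ↑(M.actG g)

/-- `E` is a `G`-submodule: a subspace stable under the `A`-action and the `G`-action. -/
def IsSub (M : GMod n G F) (E : Submodule ℂ F) : Prop :=
  (∀ (f : MvPolynomial (Fin n) ℂ) (v : F), v ∈ E → M.actA f v ∈ E) ∧
  (∀ (g : G) (v : F), v ∈ E → M.actG g v ∈ E)

/-- The character of the `G`-representation on a `G`-stable subspace `E`. -/
def subChar (M : GMod n G F) (E : Submodule ℂ F)
    (h : ∀ (g : G) (v : F), v ∈ E → M.actG g v ∈ E) : G → ℂ :=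
  fun g => LinearMap.trace ℂ E
    ((↑(M.actG g) : F →ₗ[ℂ] F).restrict (p := E) (q := E) (fun v hv => by exact h g v hv))

/-- `F` is a `G`-constellation: finite dimensional and isomorphic as a `ℂ[G]`-module
to the regular representation `Map(G,ℂ)` (with `(g·φ)(h) = φ(g⁻¹h)`). -/
def IsConstellation (M : GMod n G F) : Prop :=
  FiniteDimensional ℂ F ∧
  ∃ e : F ≃ₗ[ℂ] (G → ℂ), ∀ (g : G) (v : F) (h : G), e (M.actG g v) h = e v (g⁻¹ * h)

/-- `θ`-stability: `θ(E) > 0` for every `G`-submodule `0 ≠ E ≠ F`. -/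
def IsStable (M : GMod n G F) (θ : IrrChar G → ℚ) : Prop :=
  ∀ (E : Submodule ℂ F) (hE : M.IsSub E), E ≠ ⊥ → E ≠ ⊤ →
    0 < (thetaOfChar θ (M.subChar E hE.2)).re

/-- `θ`-semistability: `θ(E) ≥ 0` for every `G`-submodule `0 ≠ E ≠ F`. -/
def IsSemistable (M : GMod n G F) (θ : IrrChar G → ℚ) : Prop :=
  ∀ (E : Submodule ℂ F) (hE : M.IsSub E), E ≠ ⊥ → E ≠ ⊤ →
    0 ≤ (thetaOfChar θ (M.subChar E hE.2)).re

/-- The subspace `F^G` of `G`-invariant vectors. -/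
def invariants (M : GMod n G F) : Submodule ℂ F where
  carrier := {v | ∀ g : G, M.actG g v = v}
  add_mem' := by
    intro a b ha hb
    intro g
    rw [map_add, ha g, hb g]
  zero_mem' := by
    intro g
    rw [map_zero]
  smul_mem' := by
    intro c v hv
    intro g
    rw [map_smul, hv g]

/-- The `A`-submodule of `F` generated by a subset `s ⊆ F`. -/
def aspan (M : GMod n G F) (s : Set F) : Submodule ℂ F :=
  Submodule.span ℂ {w | ∃ (f : MvPolynomial (Fin n) ℂ) (v : F), v ∈ s ∧ w = M.actA f v}

end GMod

/-- `φ : F → F'` is simultaneously `A`-linear and `G`-equivariant. -/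
def IsGHom {n : ℕ} {G : Subgroup (GL (Fin n) ℂ)} {F F' : Type}
    [AddCommGroup F] [Module ℂ F] [AddCommGroup F'] [Module ℂ F']
    (M : GMod n G F) (M' : GMod n G F') (φ : F →ₗ[ℂ] F') : Prop :=
  (∀ (f : MvPolynomial (Fin n) ℂ) (v : F), φ (M.actA f v) = M'.actA f (φ v)) ∧
  (∀ (g : G) (v : F), φ (M.actG g v) = M'.actG g (φ v))

end

noncomputable section Aux

open Module LinearMap Representation

set_option maxHeartbeats 1000000

/-- Multiplicity pairing of two characters equals a dimension (hence a natural number). -/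
lemma multCore {G' : Type} [Group G'] [Fintype G']
    [Invertible ((Fintype.card G' : ℂ))] (V W : FDRep ℂ G') :
    ⅟(Fintype.card G' : ℂ) • ∑ g : G', V.character g * W.character g⁻¹ =
      (finrank ℂ (invariants (linHom W.ρ V.ρ)) : ℂ) := by
  conv_lhs =>
    enter [2, 2, g]
    rw [mul_comm, ← FDRep.char_dual, ← Pi.mul_apply, ← FDRep.char_tensor]
    rw [FDRep.char_iso (FDRep.dualTensorIsoLinHom W.ρ V)]
  rw [smul_eq_mul, invOf_eq_inv, Fintype.card_eq_nat_card, FDRep.average_char_eq_finrank_invariants]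
  rw [show (FDRep.of (linHom W.ρ V.ρ)).ρ = linHom W.ρ V.ρ from FDRep.of_ρ' (linHom W.ρ V.ρ)]

open scoped Classical in
/-- Orthonormality of irreducible characters, for an arbitrary finite group type. -/
lemma orthCore {G' : Type} [Group G'] [Fintype G']
    [Invertible ((Fintype.card G' : ℂ))] (V W : FDRep ℂ G') [Simple V] [Simple W] :
    ⅟(Fintype.card G' : ℂ) • ∑ g : G', V.character g * W.character g⁻¹ =
      if Nonempty (V ≅ W) then (1 : ℂ) else 0 := by
  have := FDRep.char_orthonormal V W
  rw [smul_eq_mul, invOf_eq_inv, Fintype.card_eq_nat_card, this]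

variable {n : ℕ} {G : Subgroup (GL (Fin n) ℂ)}

section Fin
variable [Fintype ↥G]

instance : Invertible ((Fintype.card ↥G : ℂ)) :=
  invertibleOfNonzero (by exact_mod_cast Fintype.card_ne_zero)

lemma card_cast_ne_zero : (Nat.card ↥G : ℂ) ≠ 0 := by
  rw [Nat.card_eq_fintype_card]; exact_mod_cast Fintype.card_ne_zero

lemma multChar_sum (ρ : IrrChar G) (χ : ↥G → ℂ) :
    multChar ρ χ = (Fintype.card ↥G : ℂ)⁻¹ * ∑ g : ↥G, ρ.1 g⁻¹ * χ g := by
  rw [multChar, finsum_eq_sum_of_fintype, Nat.card_eq_fintype_card]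

/-- The multiplicity pairing as a linear map in the second argument. -/
def pairL (ρ : IrrChar G) : (↥G → ℂ) →ₗ[ℂ] ℂ where
  toFun := multChar ρ
  map_add' χ ψ := by
    simp only [multChar_sum, Pi.add_apply, mul_add, Finset.sum_add_distrib, mul_add]
  map_smul' c χ := by
    simp only [multChar_sum, Pi.smul_apply, smul_eq_mul, RingHom.id_apply]
    rw [Finset.mul_sum, Finset.mul_sum, Finset.mul_sum]
    ring_nf
    congr 1
    ext g
    ring

lemma multChar_of_char (ρ : IrrChar G) (W : FDRep ℂ ↥G) :
    ∃ m : ℕ, multChar ρ W.character = m := by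
  obtain ⟨V, hs, hc⟩ := ρ.2
  refine ⟨finrank ℂ (invariants (linHom W.ρ V.ρ)), ?_⟩
  rw [multChar_sum]
  have h1 : ∑ g : ↥G, ρ.1 g⁻¹ * W.character g
      = ∑ g : ↥G, V.character g * W.character g⁻¹ := by
    rw [← Equiv.sum_comp (Equiv.inv ↥G) fun g => V.character g * W.character g⁻¹]
    simp [hc]
  rw [h1, ← multCore V W, smul_eq_mul, invOf_eq_inv]

lemma multChar_triv (ρ : IrrChar G) (hρ : ρ.1 = fun _ => (1 : ℂ)) (W : FDRep ℂ ↥G) :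
    multChar ρ W.character = (finrank ℂ (invariants W.ρ) : ℂ) := by
  rw [multChar_sum, ← FDRep.average_char_eq_finrank_invariants, Fintype.card_eq_nat_card]
  simp [hρ]

open scoped Classical in
lemma pair_eq (ρ ρ' : IrrChar G) :
    multChar ρ ρ'.1 = if ρ' = ρ then 1 else 0 := by
  obtain ⟨V, hsV, hcV⟩ := ρ.2
  obtain ⟨V', hsV', hcV'⟩ := ρ'.2
  haveI := hsV; haveI := hsV'
  have key : multChar ρ ρ'.1
      = ⅟(Fintype.card ↥G : ℂ) • ∑ g : ↥G, V.character g * V'.character g⁻¹ := by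
    rw [multChar_sum, smul_eq_mul, invOf_eq_inv]
    congr 1
    rw [← Equiv.sum_comp (Equiv.inv ↥G) fun g => V.character g * V'.character g⁻¹]
    simp [hcV, hcV']
  by_cases h : ρ' = ρ
  · subst h
    have hiso : Nonempty (V ≅ V') := by
      by_contra hn
      have h0 := orthCore V V'
      rw [if_neg hn] at h0
      have h1 := orthCore V V
      rw [if_pos ⟨Iso.refl V⟩] at h1
      have : ∑ g : ↥G, V.character g * V'.character g⁻¹
          = ∑ g : ↥G, V.character g * V.character g⁻¹ := by
        apply Finset.sum_congr rfl
        intro g _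
        simp only [hcV, hcV']
      rw [this, h1] at h0
      exact one_ne_zero h0
    rw [key, orthCore V V', if_pos hiso, if_pos rfl]
  · have hiso : ¬ Nonempty (V ≅ V') := by
      rintro ⟨i⟩
      apply h
      apply Subtype.ext
      funext g
      rw [← hcV' g, ← hcV g, FDRep.char_iso i]
    rw [key, orthCore V V', if_neg hiso, if_neg h]

open scoped Classical in
lemma irrChar_finite : Finite (IrrChar G) := by
  have hli : LinearIndependent ℂ (fun ρ : IrrChar G => (ρ.1 : ↥G → ℂ)) := by
    rw [linearIndependent_iff']
    intro s c hsum i hi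
    have := congrArg (pairL i) hsum
    rw [map_sum, map_zero] at this
    have h2 : ∀ j ∈ s, pairL i (c j • (j.1 : ↥G → ℂ)) = if j = i then c j else 0 := by
      intro j _
      rw [map_smul, smul_eq_mul]
      show c j * multChar i j.1 = _
      rw [pair_eq i j]
      split <;> simp
    rw [Finset.sum_congr rfl h2, Finset.sum_ite_eq' s i (fun j => c j), if_pos hi] at this
    exact this
  exact hli.finite

end Fin

end Aux

noncomputable section Aux2

open Module LinearMap

set_option maxHeartbeats 1000000

namespace GMod

variable {n : ℕ} {G : Subgroup (GL (Fin n) ℂ)} [Fintype ↥G]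
variable {F : Type} [AddCommGroup F] [Module ℂ F] (M : GMod n G F)

omit [Fintype ↥G] in
lemma actG_mul_apply (g g' : ↥G) (v : F) :
    M.actG (g * g') v = M.actG g (M.actG g' v) := by
  rw [map_mul]; rfl

omit [Fintype ↥G] in
lemma actG_one_apply (v : F) : M.actG 1 v = v := by
  rw [map_one]; rfl

omit [Fintype ↥G] in
lemma actG_inv_cancel (g : ↥G) (v : F) : M.actG g (M.actG g⁻¹ v) = v := by
  rw [← actG_mul_apply, mul_inv_cancel, actG_one_apply]

omit [Fintype ↥G] in
lemma actG_inv_cancel' (g : ↥G) (v : F) : M.actG g⁻¹ (M.actG g v) = v := by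
  rw [← actG_mul_apply, inv_mul_cancel, actG_one_apply]

/-- The representation of `G` on a `G`-stable subspace `W`. -/
def repOn (W : Submodule ℂ F) (h : ∀ (g : ↥G) (v : F), v ∈ W → M.actG g v ∈ W) :
    Representation ℂ ↥G ↥W where
  toFun g := (↑(M.actG g) : F →ₗ[ℂ] F).restrict (p := W) (q := W) (fun v hv => h g v hv)
  map_one' := LinearMap.ext fun x => Subtype.ext (M.actG_one_apply (x : F))
  map_mul' g g' := LinearMap.ext fun x => Subtype.ext (M.actG_mul_apply g g' (x : F))

lemma subChar_eq_char [FiniteDimensional ℂ F] (W : Submodule ℂ F)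
    (h : ∀ (g : ↥G) (v : F), v ∈ W → M.actG g v ∈ W) :
    M.subChar W h = (FDRep.of (M.repOn W h)).character := rfl

/-- Existence of a `G`-stable complement (Maschke, by averaging a projector). -/
lemma exists_invariant_compl [FiniteDimensional ℂ F] (W : Submodule ℂ F)
    (h : ∀ (g : ↥G) (v : F), v ∈ W → M.actG g v ∈ W) :
    ∃ W' : Submodule ℂ F,
      (∀ (g : ↥G) (v : F), v ∈ W' → M.actG g v ∈ W') ∧ IsCompl W W' := by
  obtain ⟨q0, hq0⟩ := Submodule.exists_isCompl W
  set p : F →ₗ[ℂ] F := W.subtype ∘ₗ (W.projectionOnto q0 hq0) with hp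
  have hpmem : ∀ v : F, p v ∈ W := fun v => (W.projectionOnto q0 hq0 v).2
  have hpid : ∀ v ∈ W, p v = v := by
    intro v hv
    simp [hp, Submodule.projectionOnto_apply_left hq0 ⟨v, hv⟩]
  set Q : F →ₗ[ℂ] F := (Fintype.card ↥G : ℂ)⁻¹ •
      ∑ g : ↥G, ((M.actG g : F ≃ₗ[ℂ] F) : F →ₗ[ℂ] F) ∘ₗ
        (p ∘ₗ ((M.actG g⁻¹ : F ≃ₗ[ℂ] F) : F →ₗ[ℂ] F)) with hQ
  have hQapp : ∀ v : F, Q v = (Fintype.card ↥G : ℂ)⁻¹ •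
      ∑ g : ↥G, M.actG g (p (M.actG g⁻¹ v)) := by
    intro v
    simp [hQ, LinearMap.sum_apply]
  have hQmem : ∀ v : F, Q v ∈ W := by
    intro v
    rw [hQapp]
    refine Submodule.smul_mem _ _ (Submodule.sum_mem _ fun g _ => ?_)
    exact h g _ (hpmem _)
  have hQid : ∀ v ∈ W, Q v = v := by
    intro v hv
    rw [hQapp]
    have heach : ∀ g : ↥G, M.actG g (p (M.actG g⁻¹ v)) = v := by
      intro g
      rw [hpid _ (h g⁻¹ v hv), actG_inv_cancel]
    rw [Finset.sum_congr rfl fun g _ => heach g, Finset.sum_const, Finset.card_univ]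
    rw [← Nat.cast_smul_eq_nsmul ℂ, smul_smul]
    rw [inv_mul_cancel₀ (by exact_mod_cast Fintype.card_ne_zero), one_smul]
  have hQequiv : ∀ (g : ↥G) (v : F), Q (M.actG g v) = M.actG g (Q v) := by
    intro g v
    rw [hQapp, hQapp, map_smul, map_sum]
    congr 1
    rw [← Equiv.sum_comp (Equiv.mulLeft g) fun x : ↥G => M.actG x (p (M.actG x⁻¹ (M.actG g v)))]
    apply Finset.sum_congr rfl
    intro x _
    have h1 : M.actG ((Equiv.mulLeft g) x)⁻¹ (M.actG g v) = M.actG x⁻¹ v := by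
      show M.actG (g * x)⁻¹ (M.actG g v) = _
      rw [mul_inv_rev, actG_mul_apply, actG_inv_cancel']
    rw [h1]
    show M.actG (g * x) _ = _
    rw [actG_mul_apply]
  set Qr : F →ₗ[ℂ] W := Q.codRestrict W hQmem with hQr
  have hQrid : ∀ x : ↥W, Qr x = x := by
    intro x
    apply Subtype.ext
    show Q ↑x = ↑x
    exact hQid _ x.2
  refine ⟨LinearMap.ker Qr, ?_, LinearMap.isCompl_of_proj hQrid⟩
  intro g v hv
  have hv' : Q v = 0 := by
    have : (Qr v : F) = 0 := by rw [(LinearMap.mem_ker).mp hv]; rfl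
    exact this
  rw [LinearMap.mem_ker]
  apply Subtype.ext
  show Q (M.actG g v) = 0
  rw [hQequiv, hv', map_zero]

/-- Additivity of the character over a `G`-stable complementary pair. -/
lemma char_decomp [FiniteDimensional ℂ F] (W W' : Submodule ℂ F)
    (h : ∀ (g : ↥G) (v : F), v ∈ W → M.actG g v ∈ W)
    (h' : ∀ (g : ↥G) (v : F), v ∈ W' → M.actG g v ∈ W')
    (hc : IsCompl W W') (g : ↥G) :
    M.char g = M.subChar W h g + M.subChar W' h' g := by
  set φ := Submodule.prodEquivOfIsCompl W W' hc with hφ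
  set f1 := (↑(M.actG g) : F →ₗ[ℂ] F).restrict (p := W) (q := W) (fun v hv => h g v hv) with hf1
  set f2 := (↑(M.actG g) : F →ₗ[ℂ] F).restrict (p := W') (q := W') (fun v hv => h' g v hv) with hf2
  have key : (↑(M.actG g) : F →ₗ[ℂ] F) = φ.conj (LinearMap.prodMap f1 f2) := by
    ext v
    have hv : v ∈ W ⊔ W' := by rw [hc.sup_eq_top]; trivial
    obtain ⟨x, hx, y, hy, rfl⟩ := Submodule.mem_sup.mp hv
    rw [LinearEquiv.conj_apply_apply]
    have hsymm : φ.symm (x + y) = (⟨x, hx⟩, ⟨y, hy⟩) := by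
      apply φ.injective
      rw [φ.apply_symm_apply]
      show x + y = (⟨x, hx⟩ : W) + ((⟨y, hy⟩ : W') : F)
      rfl
    rw [hsymm]
    show M.actG g (x + y) = ↑(f1 ⟨x, hx⟩) + ↑(f2 ⟨y, hy⟩)
    rw [map_add]
    rfl
  show LinearMap.trace ℂ F (↑(M.actG g)) = _
  rw [key, LinearMap.trace_conj', LinearMap.trace_prodMap']
  rfl

/-- The character of a `G`-constellation is the regular character. -/
lemma char_reg (hcon : M.IsConstellation) (g : ↥G) :
    M.char g = if g = 1 then (Fintype.card ↥G : ℂ) else 0 := by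
  classical
  obtain ⟨hfd, e, he⟩ := hcon
  haveI := hfd
  set T : (↥G → ℂ) →ₗ[ℂ] (↥G → ℂ) := LinearMap.funLeft ℂ ℂ (fun h => g⁻¹ * h) with hT
  have key : (↑(M.actG g) : F →ₗ[ℂ] F) = (e.symm : (↥G → ℂ) ≃ₗ[ℂ] F).conj T := by
    ext v
    rw [LinearEquiv.conj_apply_apply]
    apply e.injective
    rw [LinearEquiv.symm_symm, e.apply_symm_apply]
    funext h
    have h0 : (↑(M.actG g) : F →ₗ[ℂ] F) v = M.actG g v := rfl
    rw [h0, he g v h]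
    rw [hT, LinearMap.funLeft_apply]
  show LinearMap.trace ℂ F (↑(M.actG g)) = _
  rw [key, LinearMap.trace_conj']
  rw [LinearMap.trace_eq_matrix_trace ℂ (Pi.basisFun ℂ ↥G)]
  rw [Matrix.trace]
  have hdiag : ∀ i : ↥G, Matrix.diag
      (LinearMap.toMatrix (Pi.basisFun ℂ ↥G) (Pi.basisFun ℂ ↥G) T) i
      = if g⁻¹ * i = i then (1 : ℂ) else 0 := by
    intro i
    rw [Matrix.diag_apply, LinearMap.toMatrix_apply, Pi.basisFun_apply, Pi.basisFun_repr]
    rw [hT, LinearMap.funLeft_apply, Pi.single_apply]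
  rw [Finset.sum_congr rfl fun i _ => hdiag i]
  by_cases hg : g = 1
  · subst hg
    simp [Finset.card_univ]
  · rw [Finset.sum_eq_zero, if_neg hg]
    intro i _
    rw [if_neg]
    intro hcc
    exact hg (by
      have h2 : g⁻¹ * i = 1 * i := by rw [hcc, one_mul]
      have h3 := mul_right_cancel h2
      rw [← inv_inv g, h3, inv_one])

lemma multChar_reg (hcon : M.IsConstellation) (ρ : IrrChar G) :
    multChar ρ M.char = ρ.1 1 := by
  classical
  rw [multChar_sum]
  have heach : ∀ g : ↥G, ρ.1 g⁻¹ * M.char g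
      = if g = 1 then ρ.1 1 * (Fintype.card ↥G : ℂ) else 0 := by
    intro g
    rw [char_reg M hcon]
    split
    · rename_i hg
      subst hg
      rw [inv_one]
    · ring
  rw [Finset.sum_congr rfl fun g _ => heach g, Finset.sum_ite_eq' Finset.univ 1
    (fun _ => ρ.1 1 * (Fintype.card ↥G : ℂ)), if_pos (Finset.mem_univ 1)]
  have hc0 : (Fintype.card ↥G : ℂ) ≠ 0 := by exact_mod_cast Fintype.card_ne_zero
  field_simp

end GMod

end Aux2

noncomputable section Aux3

open Module LinearMap

set_option maxHeartbeats 1000000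

namespace GMod

variable {n : ℕ} {G : Subgroup (GL (Fin n) ℂ)}
variable {F : Type} [AddCommGroup F] [Module ℂ F] (M : GMod n G F)

lemma invariants_facts (hcon : M.IsConstellation) :
    Module.finrank ℂ ↥(M.invariants) = 1 ∧
    ∃ v0 : F, v0 ≠ 0 ∧ v0 ∈ M.invariants ∧ M.invariants = Submodule.span ℂ {v0} := by
  obtain ⟨hfd, e, he⟩ := hcon
  haveI := hfd
  have hconst : ∀ c : ℂ, e.symm (fun _ => c) ∈ M.invariants := by
    intro c g
    apply e.injective
    funext h
    rw [he g _ h, e.apply_symm_apply]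
  have heval : ∀ v ∈ M.invariants, ∀ h : ↥G, e v h = e v 1 := by
    intro v hv h
    have h1 := he h v h
    rw [hv h, inv_mul_cancel] at h1
    exact h1
  set L : ↥(M.invariants) →ₗ[ℂ] ℂ :=
    { toFun := fun v => e (v : F) 1
      map_add' := by intro a b; simp
      map_smul' := by intro c a; simp } with hL
  have hinj : Function.Injective L := by
    intro a b hab
    apply Subtype.ext
    apply e.injective
    funext h
    rw [heval _ a.2 h, heval _ b.2 h]
    exact hab
  have hsurj : Function.Surjective L := by
    intro c
    refine ⟨⟨e.symm (fun _ => c), hconst c⟩, ?_⟩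
    show e (e.symm (fun _ => c)) 1 = c
    rw [e.apply_symm_apply]
  have hrank : finrank ℂ ↥(M.invariants) = 1 := by
    rw [(LinearEquiv.ofBijective L ⟨hinj, hsurj⟩).finrank_eq, finrank_self]
  refine ⟨hrank, e.symm (fun _ => 1), ?_, hconst 1, ?_⟩
  · intro h0
    have h1 := congrArg e h0
    rw [e.apply_symm_apply, map_zero] at h1
    exact one_ne_zero (congrFun h1 1)
  · have hne : e.symm (fun _ => (1 : ℂ)) ≠ 0 := by
      intro h0
      have h1 := congrArg e h0
      rw [e.apply_symm_apply, map_zero] at h1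
      exact one_ne_zero (congrFun h1 1)
    have hle : Submodule.span ℂ {e.symm (fun _ => (1 : ℂ))} ≤ M.invariants := by
      rw [Submodule.span_le, Set.singleton_subset_iff]
      exact hconst 1
    refine (Submodule.eq_of_le_of_finrank_le hle ?_).symm
    rw [hrank, finrank_span_singleton hne]

lemma mem_aspan_self (s : Set F) : ∀ v ∈ s, v ∈ M.aspan s := by
  intro v hv
  apply Submodule.subset_span
  refine ⟨1, v, hv, ?_⟩
  rw [map_one]
  rfl

lemma aspan_isSub (s : Set F) (hs : ∀ v ∈ s, v ∈ M.invariants) : M.IsSub (M.aspan s) := by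
  constructor
  · intro f v hv
    induction hv using Submodule.span_induction with
    | mem x hx =>
      obtain ⟨f₂, v₂, hv₂, rfl⟩ := hx
      apply Submodule.subset_span
      refine ⟨f * f₂, v₂, hv₂, ?_⟩
      rw [map_mul]
      rfl
    | zero => rw [map_zero]; exact Submodule.zero_mem _
    | add x y hx hy ihx ihy => rw [map_add]; exact Submodule.add_mem _ ihx ihy
    | smul a x hx ih => rw [map_smul]; exact Submodule.smul_mem _ a ih
  · intro g v hv
    induction hv using Submodule.span_induction with
    | mem x hx =>
      obtain ⟨f₂, v₂, hv₂, rfl⟩ := hx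
      apply Submodule.subset_span
      refine ⟨polyAct (g : GL (Fin n) ℂ) f₂, v₂, hv₂, ?_⟩
      rw [M.equivariance g f₂ v₂, hs v₂ hv₂ g]
    | zero => rw [map_zero]; exact Submodule.zero_mem _
    | add x y hx hy ihx ihy => rw [map_add]; exact Submodule.add_mem _ ihx ihy
    | smul a x hx ih => rw [map_smul]; exact Submodule.smul_mem _ a ih

variable [Finite ↥G]

open scoped Classical in
lemma aspan_top (θ : IrrChar G → ℚ) (hθ : IsThetaPlus G θ)
    (hcon : M.IsConstellation) (hstab : M.IsStable θ) :
    M.aspan ↑M.invariants = ⊤ := by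
  haveI : Fintype ↥G := Fintype.ofFinite ↥G
  haveI := hcon.1
  haveI : Finite (IrrChar G) := irrChar_finite
  haveI : Fintype (IrrChar G) := Fintype.ofFinite _
  obtain ⟨hrank, v0, hv0ne, hv0mem, hspan⟩ := M.invariants_facts hcon
  set E := M.aspan ↑M.invariants with hEdef
  have hsub : M.IsSub E := M.aspan_isSub ↑M.invariants (fun v hv => hv)
  by_contra hne
  have hEbot : E ≠ ⊥ := by
    rw [Submodule.ne_bot_iff]
    exact ⟨v0, M.mem_aspan_self _ v0 hv0mem, hv0ne⟩
  have hpos := hstab E hsub hEbot hne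
  obtain ⟨E', hE', hcompl⟩ := M.exists_invariant_compl E hsub.2
  have hchar : ∀ g, M.char g = M.subChar E hsub.2 g + M.subChar E' hE' g :=
    M.char_decomp E E' hsub.2 hE' hcompl
  have hinvE' : ∀ ρ : IrrChar G, ρ.1 = (fun _ => (1 : ℂ)) →
      multChar ρ (M.subChar E' hE') = 0 := by
    intro ρ hρ
    rw [M.subChar_eq_char E' hE', multChar_triv ρ hρ]
    have hbot : ((M.repOn E' hE').invariants : Submodule ℂ ↥E') = ⊥ := by
      rw [eq_bot_iff]
      intro x hx
      have hxF : (x : F) ∈ M.invariants := by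
        intro g
        exact congrArg Subtype.val (hx g)
      have hxE : (x : F) ∈ E := M.mem_aspan_self _ _ hxF
      have hx0 : (x : F) ∈ E ⊓ E' := ⟨hxE, x.2⟩
      rw [hcompl.inf_eq_bot] at hx0
      have hxx : (x : F) = 0 := hx0
      rw [Submodule.mem_bot]
      exact Subtype.ext hxx
    rw [show (FDRep.of (M.repOn E' hE')).ρ = M.repOn E' hE' from FDRep.of_ρ' _]
    rw [hbot, finrank_bot]
    norm_num
  have hnatE' : ∀ ρ : IrrChar G, ∃ m : ℕ, multChar ρ (M.subChar E' hE') = m := by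
    intro ρ
    rw [M.subChar_eq_char E' hE']
    exact multChar_of_char ρ _
  have hadd : ∀ ρ : IrrChar G, multChar ρ M.char
      = multChar ρ (M.subChar E hsub.2) + multChar ρ (M.subChar E' hE') := by
    intro ρ
    rw [multChar_sum, multChar_sum, multChar_sum, ← mul_add, ← Finset.sum_add_distrib]
    congr 1
    apply Finset.sum_congr rfl
    intro g _
    rw [hchar g]
    ring
  have hEmult : ∀ ρ : IrrChar G, multChar ρ (M.subChar E hsub.2)
      = ρ.1 1 - multChar ρ (M.subChar E' hE') := by
    intro ρ
    have h1 := hadd ρ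
    rw [M.multChar_reg hcon ρ] at h1
    rw [h1]
    ring
  have hsum : thetaOfChar θ (M.subChar E hsub.2)
      = (∑ ρ : IrrChar G, (ρ.1 1) * (θ ρ : ℂ))
        - ∑ ρ : IrrChar G, multChar ρ (M.subChar E' hE') * (θ ρ : ℂ) := by
    rw [thetaOfChar, finsum_eq_sum_of_fintype, ← Finset.sum_sub_distrib]
    apply Finset.sum_congr rfl
    intro ρ _
    rw [hEmult ρ]
    ring
  have hzero : (∑ ρ : IrrChar G, (ρ.1 1 : ℂ) * (θ ρ : ℂ)) = 0 := by
    have h2 := hθ.1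
    rwa [IsThetaParam, finsum_eq_sum_of_fintype] at h2
  have hre : 0 ≤ (∑ ρ : IrrChar G, multChar ρ (M.subChar E' hE') * (θ ρ : ℂ)).re := by
    rw [Complex.re_sum]
    apply Finset.sum_nonneg
    intro ρ _
    by_cases hρ : ρ.1 = fun _ => (1 : ℂ)
    · rw [hinvE' ρ hρ, zero_mul, Complex.zero_re]
    · obtain ⟨m, hm⟩ := hnatE' ρ
      have hθpos := hθ.2 ρ hρ
      rw [hm, show ((m : ℂ) * ((θ ρ : ℚ) : ℂ)) = (((m * θ ρ : ℚ)) : ℂ) by push_cast; ring,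
        Complex.ratCast_re]
      have : (0 : ℚ) ≤ (m : ℚ) * θ ρ := mul_nonneg (by positivity) hθpos.le
      exact_mod_cast this
  have hle : (thetaOfChar θ (M.subChar E hsub.2)).re ≤ 0 := by
    rw [hsum, hzero, zero_sub, Complex.neg_re]
    linarith
  linarith

end GMod

end Aux3

set_option maxHeartbeats 1000000 in
/-- For `θ ∈ Θ₊` and a `θ`-stable `G`-constellation `F`, the invariants
`F^G` are one-dimensional and generate `F` as an `A`-module; in particular `F` is a cyclic
`A`-module and `F ≅ A/I` for a `G`-stable ideal `I` (i.e. `F` is the structure sheaf of a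
`G`-cluster). -/
theorem stmt0 {n : ℕ} {G : Subgroup (GL (Fin n) ℂ)} [Finite G]
    (θ : IrrChar G → ℚ) (hθ : IsThetaPlus G θ)
    {F : Type} [AddCommGroup F] [Module ℂ F] (M : GMod n G F)
    (hcon : M.IsConstellation) (hstab : M.IsStable θ) :
    Module.finrank ℂ ↥(M.invariants) = 1 ∧
    M.aspan (M.invariants : Set F) = ⊤ ∧
    (∃ v : F, M.aspan {v} = ⊤) ∧
    (∃ I : Ideal (MvPolynomial (Fin n) ℂ),
      (∀ (g : G) (f : MvPolynomial (Fin n) ℂ), f ∈ I → polyAct (g : GL (Fin n) ℂ) f ∈ I) ∧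
      ∃ π : MvPolynomial (Fin n) ℂ →ₗ[ℂ] F,
        (∀ f a : MvPolynomial (Fin n) ℂ, π (f * a) = M.actA f (π a)) ∧
        (∀ (g : G) (f : MvPolynomial (Fin n) ℂ),
          π (polyAct (g : GL (Fin n) ℂ) f) = M.actG g (π f)) ∧
        Function.Surjective π ∧
        (∀ f : MvPolynomial (Fin n) ℂ, f ∈ I ↔ π f = 0)) := by
  classical
  haveI : Fintype ↥G := Fintype.ofFinite ↥G
  haveI := hcon.1
  obtain ⟨hrank, v0, hv0ne, hv0mem, hspan⟩ := M.invariants_facts hcon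
  have htop : M.aspan ↑M.invariants = ⊤ := M.aspan_top θ hθ hcon hstab
  have htop1 : M.aspan {v0} = ⊤ := by
    rw [← top_le_iff, ← htop, GMod.aspan, Submodule.span_le]
    rintro w ⟨f, v, hv, rfl⟩
    have hv' : v ∈ Submodule.span ℂ {v0} := by rw [← hspan]; exact hv
    obtain ⟨c, rfl⟩ := Submodule.mem_span_singleton.mp hv'
    rw [map_smul]
    exact Submodule.smul_mem _ c
      (Submodule.subset_span ⟨f, v0, Set.mem_singleton v0, rfl⟩)
  set π : MvPolynomial (Fin n) ℂ →ₗ[ℂ] F :=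
    (LinearMap.applyₗ v0).comp M.actA.toLinearMap with hπ
  have hπapp : ∀ f : MvPolynomial (Fin n) ℂ, π f = M.actA f v0 := fun _ => rfl
  have hπmul : ∀ f a : MvPolynomial (Fin n) ℂ, π (f * a) = M.actA f (π a) := by
    intro f a
    rw [hπapp, hπapp, map_mul]
    rfl
  have hπequiv : ∀ (g : ↥G) (f : MvPolynomial (Fin n) ℂ),
      π (polyAct (g : GL (Fin n) ℂ) f) = M.actG g (π f) := by
    intro g f
    rw [hπapp, hπapp, M.equivariance g f v0, hv0mem g]
  have hπsurj : Function.Surjective π := by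
    rw [← LinearMap.range_eq_top, ← top_le_iff, ← htop1, GMod.aspan, Submodule.span_le]
    rintro w ⟨f, v, hv, rfl⟩
    rw [Set.mem_singleton_iff] at hv
    subst hv
    exact LinearMap.mem_range.mpr ⟨f, rfl⟩
  set I : Ideal (MvPolynomial (Fin n) ℂ) :=
    { carrier := {f | π f = 0}
      add_mem' := by
        intro a b ha hb
        simp only [Set.mem_setOf_eq] at *
        rw [map_add, ha, hb, add_zero]
      zero_mem' := by simp
      smul_mem' := by
        intro c f hf
        simp only [smul_eq_mul, Set.mem_setOf_eq] at *
        rw [hπmul c f, hf, map_zero] } with hI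
  refine ⟨hrank, htop, ⟨v0, htop1⟩, I, ?_, π, hπmul, hπequiv, hπsurj, fun f => Iff.rfl⟩
  intro g f hf
  have hf' : π f = 0 := hf
  show π (polyAct (g : GL (Fin n) ℂ) f) = 0
  rw [hπequiv g f, hf', map_zero]
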